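/- Let y(r) := (max(q^{1-β} − (1−β)∫_s^r h(τ)dτ, 0))^{1/(1-β)} for 0 < β < 1, q ≥ 0, and h ∈ L¹([s,t]) nonnegative. Then y is the unique nonnegative absolutely continuous solution on [s,t] of y'(r) = −h(r)·y(r)^β with y(s) = q. -/

import Mathlib

open MeasureTheory Set intervalIntegral


private lemma gderiv {p : ℝ} (hp : 1 < p) (v : ℝ) :
    HasDerivAt (fun v : ℝ => max v 0 ^ p) (p * max v 0 ^ (p - 1)) v := by
  have hp0 : (0:ℝ) < p - 1 := by linarith
  rcases lt_trichotomy v 0 with hv | hv | hv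
  · have he : (fun v : ℝ => max v 0 ^ p) =ᶠ[nhds v] fun _ => (0:ℝ) ^ p := by
      filter_upwards [Iio_mem_nhds hv] with x hx
      rw [max_eq_right hx.le]
    have h0 : HasDerivAt (fun _ : ℝ => (0:ℝ) ^ p) 0 v := hasDerivAt_const _ _
    have := h0.congr_of_eventuallyEq he
    simpa [max_eq_right hv.le, Real.zero_rpow hp0.ne'] using this
  · subst hv
    rw [hasDerivAt_iff_isLittleO]
    simp only [max_self, Real.zero_rpow (by linarith : p ≠ 0), Real.zero_rpow hp0.ne',
      mul_zero, smul_zero, sub_zero, zero_sub]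
    rw [Asymptotics.isLittleO_iff]
    intro c hc
    have hδ : (0:ℝ) < c ^ (1/(p-1)) := Real.rpow_pos_of_pos hc _
    filter_upwards [Metric.ball_mem_nhds (0:ℝ) hδ] with x hx
    rw [Metric.mem_ball, Real.dist_eq, sub_zero] at hx
    simp only [Real.norm_eq_abs]
    have key : |max x 0 ^ p| ≤ c * |x| := by
      rcases le_or_gt x 0 with hx0 | hx0
      · rw [max_eq_right hx0, Real.zero_rpow (by linarith : p ≠ 0), abs_zero]
        positivity
      · have hxx : |x| = x := abs_of_pos hx0
        rw [max_eq_left hx0.le, abs_of_nonneg (Real.rpow_nonneg hx0.le _), hxx]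
        have h1 : x ^ p = x ^ (p-1) * x := by
          rw [← Real.rpow_add_one hx0.ne' (p-1), sub_add_cancel]
        have h2 : x ^ (p-1) ≤ (c ^ (1/(p-1))) ^ (p-1) :=
          Real.rpow_le_rpow hx0.le (by rw [← hxx]; exact hx.le) hp0.le
        have h3 : (c ^ (1/(p-1))) ^ (p-1) = c := by
          rw [← Real.rpow_mul hc.le, one_div_mul_cancel hp0.ne', Real.rpow_one]
        rw [h1]
        exact mul_le_mul_of_nonneg_right (h3 ▸ h2) hx0.le
    calc ‖max x 0 ^ p‖ ≤ c * |x| := key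
    _ = c * ‖x‖ := rfl
  · have he : (fun v : ℝ => max v 0 ^ p) =ᶠ[nhds v] fun x => x ^ p := by
      filter_upwards [Ioi_mem_nhds hv] with x hx
      rw [max_eq_left hx.le]
    have := (Real.hasDerivAt_rpow_const (p := p) (Or.inl hv.ne')).congr_of_eventuallyEq he
    simpa [max_eq_left hv.le] using this
open MeasureTheory Set intervalIntegral

private lemma key_ftc {s r : ℝ} (hsr : s ≤ r) (h ψ Φ : ℝ → ℝ)
    (hint : IntervalIntegrable h volume s r)
    (hpos : ∀ τ ∈ Icc s r, 0 ≤ h τ)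
    (hψc : Continuous ψ) (hψa : Antitone ψ)
    (hΦ : ∀ u, HasDerivAt Φ (ψ u) u) :
    ∫ τ in s..r, h τ * ψ (∫ σ in s..τ, h σ)
      = Φ (∫ σ in s..r, h σ) - Φ 0 := by
  set H : ℝ → ℝ := fun x => ∫ σ in s..x, h σ with hHdef
  have hmem : ∀ {a}, a ∈ Icc s r → a ∈ uIcc s r := by
    intro a ha; rwa [uIcc_of_le hsr]
  have hsub : ∀ {a b}, a ∈ Icc s r → b ∈ Icc s r → IntervalIntegrable h volume a b :=
    fun ha hb => hint.mono_set (uIcc_subset_uIcc (hmem ha) (hmem hb))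
  have hself : s ∈ Icc s r := ⟨le_rfl, hsr⟩
  have hrmem : r ∈ Icc s r := ⟨hsr, le_rfl⟩
  have hHon : IntegrableOn h (uIcc s r) volume := by
    rw [uIcc_of_le hsr]
    exact (intervalIntegrable_iff_integrableOn_Icc_of_le hsr).mp hint
  have Hcont : ContinuousOn H (Icc s r) := by
    have := intervalIntegral.continuousOn_primitive_interval hHon
    rwa [uIcc_of_le hsr] at this
  have Hadd : ∀ {a b}, a ∈ Icc s r → b ∈ Icc s r → H b - H a = ∫ τ in a..b, h τ := by
    intro a b ha hb
    have := intervalIntegral.integral_add_adjacent_intervals (hsub hself ha) (hsub ha hb)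
    simp only [hHdef]; linarith [this]
  have Hmono : ∀ {a b}, a ∈ Icc s r → b ∈ Icc s r → a ≤ b → H a ≤ H b := by
    intro a b ha hb hab
    have h1 : H b - H a = ∫ τ in a..b, h τ := Hadd ha hb
    have h2 : 0 ≤ ∫ τ in a..b, h τ :=
      intervalIntegral.integral_nonneg hab fun u hu =>
        hpos u ⟨ha.1.trans hu.1, hu.2.trans hb.2⟩
    linarith
  have Hs : H s = 0 := intervalIntegral.integral_same
  have hψH : ContinuousOn (fun τ => ψ (H τ)) (Icc s r) := hψc.comp_continuousOn Hcont
  have hprod : ∀ {a b}, a ∈ Icc s r → b ∈ Icc s r →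
      IntervalIntegrable (fun τ => h τ * ψ (H τ)) volume a b :=
    fun ha hb => (hsub ha hb).mul_continuousOn
      (hψH.mono ((uIcc_subset_uIcc (hmem ha) (hmem hb)).trans (by rw [uIcc_of_le hsr])))
  set D : ℝ → ℝ := fun x => (∫ τ in s..x, h τ * ψ (H τ)) - (Φ (H x) - Φ 0) with hDdef
  have ΦC : Continuous Φ := by
    rw [continuous_iff_continuousAt]; exact fun u => (hΦ u).continuousAt
  have Dcont : ContinuousOn D (Icc s r) := by
    apply ContinuousOn.sub
    · have : IntegrableOn (fun τ => h τ * ψ (H τ)) (uIcc s r) volume := by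
        rw [uIcc_of_le hsr]
        exact (intervalIntegrable_iff_integrableOn_Icc_of_le hsr).mp (hprod hself hrmem)
      have := intervalIntegral.continuousOn_primitive_interval this
      rwa [uIcc_of_le hsr] at this
    · exact ((ΦC.comp_continuousOn Hcont).sub continuousOn_const)
  have Ds : D s = 0 := by simp [hDdef, Hs]
  have main : ∀ ε : ℝ, 0 < ε → |D r| ≤ ε * H r := by
    intro ε hε
    set E : Set ℝ := {x | |D x| ≤ ε * H x} with hEdef
    have hclosed : IsClosed (E ∩ Icc s r) := by
      have : E ∩ Icc s r = Icc s r ∩ (fun x => |D x| - ε * H x) ⁻¹' (Iic 0) := by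
        ext x
        simp only [hEdef, mem_inter_iff, mem_setOf_eq, mem_preimage, mem_Iic, and_comm,
          sub_nonpos]
      rw [this]
      exact ContinuousOn.preimage_isClosed_of_isClosed
        ((Dcont.abs).sub (continuousOn_const.mul Hcont)) isClosed_Icc isClosed_Iic
    have hsE : s ∈ E := by simp [hEdef, Ds, Hs]
    have hstep : ∀ x ∈ E ∩ Ico s r, ∀ y ∈ Ioi x, (E ∩ Ioc x y).Nonempty := by
      intro x0 hx0 y hy
      have hx0I : x0 ∈ Icc s r := ⟨hx0.2.1, hx0.2.2.le⟩
      obtain ⟨δ, hδ, hδp⟩ := Metric.continuousWithinAt_iff.mp (hψH x0 hx0I) ε hε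
      set x1 := min (x0 + δ/2) (min y r) with hx1def
      have hx01 : x0 < x1 := lt_min (by linarith) (lt_min hy hx0.2.2)
      have hx1I : x1 ∈ Icc s r :=
        ⟨hx0I.1.trans hx01.le, (min_le_right _ _).trans (min_le_right _ _)⟩
      have hsubI : Icc x0 x1 ⊆ Icc s r := Icc_subset_Icc hx0I.1 hx1I.2
      have hnear : ∀ τ ∈ Icc x0 x1, ψ (H x0) - ε ≤ ψ (H τ) := by
        intro τ hτ
        have : dist τ x0 < δ := by
          rw [Real.dist_eq, abs_of_nonneg (by linarith [hτ.1])]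
          have : τ ≤ x0 + δ/2 := hτ.2.trans (min_le_left _ _)
          linarith
        have := hδp (hsubI hτ) this
        rw [Real.dist_eq] at this
        have := abs_lt.mp this
        linarith [this.1]
      have hΔ : H x1 - H x0 = ∫ τ in x0..x1, h τ := Hadd hx0I hx1I
      have hΔ0 : 0 ≤ H x1 - H x0 := sub_nonneg.mpr (Hmono hx0I hx1I hx01.le)
      -- bounds on the integral piece
      have ib1 : ∫ τ in x0..x1, h τ * ψ (H τ) ≤ ψ (H x0) * (H x1 - H x0) := by
        have := intervalIntegral.integral_mono_on hx01.le (hprod hx0I hx1I)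
          ((hsub hx0I hx1I).mul_const (ψ (H x0)))
          (fun τ hτ => mul_le_mul_of_nonneg_left
            (hψa (Hmono hx0I (hsubI hτ) hτ.1)) (hpos τ (hsubI hτ)))
        rwa [intervalIntegral.integral_mul_const, ← hΔ, mul_comm] at this
      have ib2 : ψ (H x1) * (H x1 - H x0) ≤ ∫ τ in x0..x1, h τ * ψ (H τ) := by
        have := intervalIntegral.integral_mono_on hx01.le
          ((hsub hx0I hx1I).mul_const (ψ (H x1))) (hprod hx0I hx1I)
          (fun τ hτ => mul_le_mul_of_nonneg_left
            (hψa (Hmono (hsubI hτ) hx1I hτ.2)) (hpos τ (hsubI hτ)))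
        rwa [intervalIntegral.integral_mul_const, ← hΔ, mul_comm] at this
      -- bounds on the Φ piece
      have hΦeq : Φ (H x1) - Φ (H x0) = ∫ u in (H x0)..(H x1), ψ u :=
        (intervalIntegral.integral_eq_sub_of_hasDerivAt (fun u _ => hΦ u)
          (hψc.intervalIntegrable _ _)).symm
      have fb1 : Φ (H x1) - Φ (H x0) ≤ ψ (H x0) * (H x1 - H x0) := by
        rw [hΦeq]
        have := intervalIntegral.integral_mono_on (sub_nonneg.mp hΔ0)
          (hψc.intervalIntegrable _ _) (intervalIntegrable_const (μ := volume))
          (fun u hu => hψa hu.1)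
        rwa [intervalIntegral.integral_const, smul_eq_mul, mul_comm] at this
      have fb2 : ψ (H x1) * (H x1 - H x0) ≤ Φ (H x1) - Φ (H x0) := by
        rw [hΦeq]
        have := intervalIntegral.integral_mono_on (sub_nonneg.mp hΔ0)
          (intervalIntegrable_const (μ := volume)) (hψc.intervalIntegrable _ _)
          (fun u hu => hψa hu.2)
        rwa [intervalIntegral.integral_const, smul_eq_mul, mul_comm] at this
      -- D difference
      have hDdiff : D x1 - D x0 =
          (∫ τ in x0..x1, h τ * ψ (H τ)) - (Φ (H x1) - Φ (H x0)) := by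
        have := intervalIntegral.integral_add_adjacent_intervals
          (hprod hself hx0I) (hprod hx0I hx1I)
        simp only [hDdef]; linarith
      have hψd : ψ (H x0) - ψ (H x1) ≤ ε := by
        have := hnear x1 ⟨hx01.le, le_rfl⟩; linarith
      have habs : |D x1 - D x0| ≤ ε * (H x1 - H x0) := by
        rw [abs_le]
        constructor
        · have : (ψ (H x0) - ψ (H x1)) * (H x1 - H x0) ≤ ε * (H x1 - H x0) :=
            mul_le_mul_of_nonneg_right hψd hΔ0
          nlinarith [ib2, fb1]
        · have : (ψ (H x0) - ψ (H x1)) * (H x1 - H x0) ≤ ε * (H x1 - H x0) :=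
            mul_le_mul_of_nonneg_right hψd hΔ0
          nlinarith [ib1, fb2]
      refine ⟨x1, ?_, hx01, (min_le_right _ _).trans (min_le_left _ _)⟩
      have : |D x1| ≤ |D x0| + |D x1 - D x0| := by
        have := abs_add_le (D x0) (D x1 - D x0)
        simpa using this
      have hx0E : |D x0| ≤ ε * H x0 := hx0.1
      simp only [hEdef, mem_setOf_eq]
      linarith
    have := hclosed.Icc_subset_of_forall_exists_gt hsE hstep
    exact this hrmem
  have hHr : 0 ≤ H r := by
    have := Hmono hself hrmem hsr; linarith [Hs ▸ this]
  have hD0 : D r = 0 := by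
    by_contra hne
    have hpos' : 0 < |D r| := abs_pos.mpr hne
    have := main (|D r| / (2 * (H r + 1))) (by positivity)
    have hlt : |D r| / (2 * (H r + 1)) * H r < |D r| := by
      rw [div_mul_eq_mul_div, div_lt_iff₀ (by positivity)]
      nlinarith
    linarith
  simp only [hDdef] at hD0
  linarith
open MeasureTheory Set intervalIntegral

private lemma le_sol {β s t q : ℝ} (hβ0 : 0 < β) (hst : s ≤ t)
    (h y z : ℝ → ℝ)
    (hh_int : IntervalIntegrable h volume s t)
    (hh_nonneg : ∀ r ∈ Icc s t, 0 ≤ h r)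
    (hyc : ContinuousOn y (Icc s t)) (hzc : ContinuousOn z (Icc s t))
    (hy0 : ∀ r ∈ Icc s t, 0 ≤ y r)
    (hye : ∀ r ∈ Icc s t, y r = q - ∫ τ in s..r, h τ * y τ ^ β)
    (hze : ∀ r ∈ Icc s t, z r = q - ∫ τ in s..r, h τ * z τ ^ β) :
    ∀ r ∈ Icc s t, z r ≤ y r := by
  intro r0 hr0
  by_contra hlt
  push_neg at hlt
  have hmem : ∀ {a}, a ∈ Icc s t → a ∈ uIcc s t := by
    intro a ha; rwa [uIcc_of_le hst]
  have hsub : ∀ {a b}, a ∈ Icc s t → b ∈ Icc s t → IntervalIntegrable h volume a b :=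
    fun ha hb => hh_int.mono_set (uIcc_subset_uIcc (hmem ha) (hmem hb))
  have hsmem : s ∈ Icc s t := ⟨le_rfl, hst⟩
  have hyβ : ContinuousOn (fun τ => y τ ^ β) (Icc s t) :=
    hyc.rpow_const (fun x _ => Or.inr hβ0.le)
  have hzβ : ContinuousOn (fun τ => z τ ^ β) (Icc s t) :=
    hzc.rpow_const (fun x _ => Or.inr hβ0.le)
  have hprody : ∀ {a b}, a ∈ Icc s t → b ∈ Icc s t →
      IntervalIntegrable (fun τ => h τ * y τ ^ β) volume a b :=
    fun ha hb => (hsub ha hb).mul_continuousOn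
      (hyβ.mono ((uIcc_subset_uIcc (hmem ha) (hmem hb)).trans (by rw [uIcc_of_le hst])))
  have hprodz : ∀ {a b}, a ∈ Icc s t → b ∈ Icc s t →
      IntervalIntegrable (fun τ => h τ * z τ ^ β) volume a b :=
    fun ha hb => (hsub ha hb).mul_continuousOn
      (hzβ.mono ((uIcc_subset_uIcc (hmem ha) (hmem hb)).trans (by rw [uIcc_of_le hst])))
  set E : Set ℝ := {x ∈ Icc s r0 | z x ≤ y x} with hEdef
  have hsE : s ∈ E := by
    refine ⟨⟨le_rfl, hr0.1⟩, ?_⟩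
    have h1 := hye s hsmem
    have h2 := hze s hsmem
    simp only [intervalIntegral.integral_same] at h1 h2
    linarith
  have hIccsub : Icc s r0 ⊆ Icc s t := Icc_subset_Icc le_rfl hr0.2
  have hEclosed : IsClosed E := by
    have : E = Icc s r0 ∩ (fun x => z x - y x) ⁻¹' (Iic 0) := by
      ext x; simp [hEdef, sub_nonpos, and_comm]
    rw [this]
    exact ContinuousOn.preimage_isClosed_of_isClosed
      ((hzc.mono hIccsub).sub (hyc.mono hIccsub)) isClosed_Icc isClosed_Iic
  have hEcp : IsCompact E :=
    isCompact_Icc.of_isClosed_subset hEclosed (sep_subset _ _)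
  set r1 := sSup E with hr1def
  have hr1E : r1 ∈ E := hEcp.sSup_mem ⟨s, hsE⟩
  have hr1I : r1 ∈ Icc s r0 := hr1E.1
  have hr1t : r1 ∈ Icc s t := hIccsub hr1I
  have hr1lt : r1 < r0 := lt_of_le_of_ne hr1I.2 (by
    intro he
    have := hr1E.2
    rw [he] at this
    linarith)
  have hub : ∀ x, x ∈ E → x ≤ r1 := fun x hx => le_csSup hEcp.bddAbove hx
  have heq : z r1 = y r1 := by
    rcases eq_or_lt_of_le hr1E.2 with he | hlt'
    · exact he
    · exfalso
      obtain ⟨δ, hδ, hδp⟩ := Metric.continuousWithinAt_iff.mp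
        (((hzc.sub hyc)) r1 hr1t) (y r1 - z r1) (by linarith)
      set x1 := min (r1 + δ/2) r0 with hx1def
      have hx01 : r1 < x1 := lt_min (by linarith) hr1lt
      have hx1I : x1 ∈ Icc s r0 := ⟨hr1I.1.trans hx01.le, min_le_right _ _⟩
      have hdist : dist x1 r1 < δ := by
        rw [Real.dist_eq, abs_of_nonneg (by linarith)]
        have : x1 ≤ r1 + δ/2 := min_le_left _ _
        linarith
      have := hδp (hIccsub hx1I) hdist
      rw [Real.dist_eq] at this
      have habs := abs_lt.mp this
      have hx1E : x1 ∈ E := ⟨hx1I, by have := habs.2; simp only [Pi.sub_apply] at this; linarith⟩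
      have := hub x1 hx1E
      linarith
  have hgt : ∀ x ∈ Ioc r1 r0, y x < z x := by
    intro x hx
    by_contra hc
    push_neg at hc
    have hxE : x ∈ E := ⟨⟨hr1I.1.trans hx.1.le, hx.2⟩, hc⟩
    exact absurd (hub x hxE) (not_le.mpr hx.1)
  -- the contradiction
  have hy01 := hye r1 hr1t
  have hy00 := hye r0 hr0
  have hz01 := hze r1 hr1t
  have hz00 := hze r0 hr0
  have haddy := intervalIntegral.integral_add_adjacent_intervals
    (hprody hsmem hr1t) (hprody hr1t hr0)
  have haddz := intervalIntegral.integral_add_adjacent_intervals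
    (hprodz hsmem hr1t) (hprodz hr1t hr0)
  have hmono : ∫ τ in r1..r0, h τ * y τ ^ β ≤ ∫ τ in r1..r0, h τ * z τ ^ β := by
    apply intervalIntegral.integral_mono_on hr1lt.le
      (hprody hr1t hr0) (hprodz hr1t hr0)
    intro τ hτ
    have hτt : τ ∈ Icc s t := hIccsub ⟨hr1I.1.trans hτ.1, hτ.2⟩
    rcases eq_or_lt_of_le hτ.1 with he | hlt'
    · rw [← he, heq]
    · exact mul_le_mul_of_nonneg_left
        (Real.rpow_le_rpow (hy0 τ hτt) (hgt τ ⟨hlt', hτ.2⟩).le hβ0.le)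
        (hh_nonneg τ hτt)
  linarith

/-- `y(r) = (max(q^{1-β} - (1-β)∫_s^r h, 0))^{1/(1-β)}` is the unique nonnegative
(absolutely continuous, here in integral form) solution of `y' = -h(r) y^β`, `y(s) = q`. -/
theorem singular_ODE_unique_solution
    (β s t q : ℝ) (hβ0 : 0 < β) (hβ1 : β < 1) (hst : s ≤ t) (hq : 0 ≤ q)
    (h : ℝ → ℝ)
    (hh_int : IntervalIntegrable h volume s t)
    (hh_nonneg : ∀ r ∈ Icc s t, 0 ≤ h r) :
    -- `y` is a nonnegative solution in integral form:
    (∀ r ∈ Icc s t,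
        (0 : ℝ) ≤ (max (q ^ (1 - β) - (1 - β) * ∫ τ in s..r, h τ) 0) ^ (1/(1 - β)) ∧
        (max (q ^ (1 - β) - (1 - β) * ∫ τ in s..r, h τ) 0) ^ (1/(1 - β))
          = q - ∫ τ in s..r,
              h τ * ((max (q ^ (1 - β) - (1 - β) * ∫ σ in s..τ, h σ) 0) ^ (1/(1 - β))) ^ β)
    ∧
    -- and it is the unique such solution:
    (∀ z : ℝ → ℝ, ContinuousOn z (Icc s t) → (∀ r ∈ Icc s t, 0 ≤ z r) →
      (∀ r ∈ Icc s t, z r = q - ∫ τ in s..r, h τ * (z τ) ^ β) →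
      ∀ r ∈ Icc s t,
        z r = (max (q ^ (1 - β) - (1 - β) * ∫ τ in s..r, h τ) 0) ^ (1/(1 - β))) := by
  have h1β : (0:ℝ) < 1 - β := by linarith
  set p : ℝ := 1/(1-β) with hpdef
  have hp1 : 1 < p := one_lt_one_div h1β (by linarith)
  have hp0 : (0:ℝ) < p - 1 := by linarith
  set c : ℝ := q ^ (1-β) with hcdef
  have hc0 : 0 ≤ c := Real.rpow_nonneg hq _
  set ψ : ℝ → ℝ := fun u => max (c - (1-β)*u) 0 ^ (p - 1) with hψdef
  set Φ : ℝ → ℝ := fun u => -(max (c - (1-β)*u) 0 ^ p) with hΦdef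
  have hℓp : p * (1-β) = 1 := by rw [hpdef]; field_simp
  have hΦd : ∀ u, HasDerivAt Φ (ψ u) u := by
    intro u
    have hℓ : HasDerivAt (fun u : ℝ => c - (1-β)*u) (-((1-β)*1)) u :=
      ((hasDerivAt_id u).const_mul (1-β)).const_sub c
    have hcomp := (gderiv hp1 (c - (1-β)*u)).comp u hℓ
    have hneg := hcomp.neg
    simp only [Function.comp_def, Pi.neg_def] at hneg
    refine hneg.congr_deriv ?_
    show _ = max (c - (1-β)*u) 0 ^ (p-1)
    linear_combination (max (c - (1-β)*u) 0 ^ (p-1)) * hℓp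
  have hψc : Continuous ψ :=
    ((continuous_const.sub (continuous_const.mul continuous_id)).max
      continuous_const).rpow_const (fun _ => Or.inr hp0.le)
  have hψa : Antitone ψ := by
    intro u v huv
    refine Real.rpow_le_rpow (le_max_right _ _) (max_le_max ?_ le_rfl) hp0.le
    nlinarith [mul_le_mul_of_nonneg_left huv h1β.le]
  have hΦ0 : Φ 0 = -q := by
    have : c ^ p = q := by
      rw [hcdef, ← Real.rpow_mul hq, mul_comm, hℓp, Real.rpow_one]
    simp only [hΦdef, mul_zero, sub_zero, max_eq_left hc0, this]
  have hpow : ∀ X : ℝ, (max X 0 ^ p) ^ β = max X 0 ^ (p - 1) := by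
    intro X
    have hβp : p * β = p - 1 := by rw [hpdef]; field_simp; ring
    rw [← Real.rpow_mul (le_max_right X 0), hβp]
  have part1 : ∀ r ∈ Icc s t,
      (0 : ℝ) ≤ (max (c - (1 - β) * ∫ τ in s..r, h τ) 0) ^ p ∧
      (max (c - (1 - β) * ∫ τ in s..r, h τ) 0) ^ p
        = q - ∫ τ in s..r,
            h τ * ((max (c - (1 - β) * ∫ σ in s..τ, h σ) 0) ^ p) ^ β := by
    intro r hr
    refine ⟨Real.rpow_nonneg (le_max_right _ _) _, ?_⟩
    have hint_r : IntervalIntegrable h volume s r := hh_int.mono_set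
      (by rw [uIcc_of_le hst, uIcc_of_le hr.1]; exact Icc_subset_Icc le_rfl hr.2)
    have hpos_r : ∀ τ ∈ Icc s r, 0 ≤ h τ := fun τ hτ => hh_nonneg τ ⟨hτ.1, hτ.2.trans hr.2⟩
    have hk := key_ftc hr.1 h ψ Φ hint_r hpos_r hψc hψa hΦd
    rw [hΦ0] at hk
    simp only [hψdef, hΦdef] at hk
    simp only [hpow]
    linarith [hk]
  have Hcont : ContinuousOn (fun x => ∫ τ in s..x, h τ) (Icc s t) := by
    have hHon : IntegrableOn h (uIcc s t) volume := by
      rw [uIcc_of_le hst]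
      exact (intervalIntegrable_iff_integrableOn_Icc_of_le hst).mp hh_int
    have := intervalIntegral.continuousOn_primitive_interval hHon
    rwa [uIcc_of_le hst] at this
  have hyc : ContinuousOn (fun r => (max (c - (1 - β) * ∫ τ in s..r, h τ) 0) ^ p)
      (Icc s t) := by
    have houter : Continuous (fun w : ℝ => (max (c - (1-β)*w) 0) ^ p) :=
      ((continuous_const.sub (continuous_const.mul continuous_id)).max
        continuous_const).rpow_const (fun _ => Or.inr (by linarith))
    exact houter.comp_continuousOn Hcont
  refine ⟨part1, ?_⟩
  intro z hzc hz0 hze r hr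
  have hy0 : ∀ r ∈ Icc s t,
      0 ≤ (fun r => (max (c - (1 - β) * ∫ τ in s..r, h τ) 0) ^ p) r :=
    fun r hr => (part1 r hr).1
  have hye : ∀ r ∈ Icc s t,
      (fun r => (max (c - (1 - β) * ∫ τ in s..r, h τ) 0) ^ p) r
        = q - ∫ τ in s..r, h τ *
            ((fun r => (max (c - (1 - β) * ∫ τ in s..r, h τ) 0) ^ p) τ) ^ β :=
    fun r hr => (part1 r hr).2
  have h1 := le_sol hβ0 hst h
    (fun r => (max (c - (1 - β) * ∫ τ in s..r, h τ) 0) ^ p) z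
    hh_int hh_nonneg hyc hzc hy0 hye hze r hr
  have h2 := le_sol hβ0 hst h z
    (fun r => (max (c - (1 - β) * ∫ τ in s..r, h τ) 0) ^ p)
    hh_int hh_nonneg hzc hyc hz0 hze hye r hr
  exact le_antisymm h1 h2
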